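/- Let K be a field, P(x,y,T) = p(x,y) - T·x^c·U(x,y) ∈ K(T)[[x,y]] with p ∈ K[[x,y]], c > 0, U a unit in K[[x,y]], and x not dividing p. If the Newton polygon of P has an edge ℓ containing the vertex (c,0) (a dicritical edge), then the coefficient polynomial q_ℓ(1,s) ∈ K[T][s] attached to ℓ has the form q_ℓ(1,s) = a_0 s^{d} + a_1 s^{d-1} + ⋯ + a_{d-1} s - (T - a_d) with all a_j ∈ K; in particular only the constant coefficient depends on T, and it is linear in T. -/

import Mathlib

/-- For a special pencil `P = p - T·x^c·U` and a dicritical edge `ℓ` on the line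
`n·i + m·j = n·c` containing the vertex `(c,0)` (edge points
`(u + m·k, n·(dℓ - k))`, `k = 0,…,dℓ`, with `u + m·dℓ = c`), the attached
polynomial `q_ℓ(1,s) ∈ K[T][s]` has all coefficients in `K` except the constant
one, which is `-(U(0,0)·T - a_{dℓ})`, i.e. linear in `T`. -/
theorem stmt_11 (K : Type*) [Field K] (n m c u dl : ℕ)
    (hn : 0 < n) (hm : 0 < m) (hcop : Nat.Coprime n m) (hc : 0 < c)
    (p U : MvPowerSeries (Fin 2) K) (hU : IsUnit U)
    (hx : ¬ (MvPowerSeries.X 0 ∣ p))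
    (hedge : u + m * dl = c) :
    ∃ a : ℕ → K,
      (∑ k ∈ Finset.range (dl + 1),
        Polynomial.C
          (Polynomial.C ((MvPowerSeries.coeff (R := K)
              (Finsupp.single (0 : Fin 2) (u + m * k) +
                Finsupp.single (1 : Fin 2) (n * (dl - k)))) p) -
            Polynomial.C ((MvPowerSeries.coeff (R := K)
              (Finsupp.single (0 : Fin 2) (u + m * k) +
                Finsupp.single (1 : Fin 2) (n * (dl - k))))
              (MvPowerSeries.X 0 ^ c * U)) * Polynomial.X) *
          Polynomial.X ^ (dl - k)) =
      (∑ j ∈ Finset.range dl,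
          Polynomial.C (Polynomial.C (a j)) * Polynomial.X ^ (dl - j))
        - Polynomial.C
            (Polynomial.C (MvPowerSeries.constantCoeff (σ := Fin 2) (R := K) U) * Polynomial.X
              - Polynomial.C (a dl)) := by
  refine ⟨fun j => (MvPowerSeries.coeff (R := K)
      (Finsupp.single (0 : Fin 2) (u + m * j) +
        Finsupp.single (1 : Fin 2) (n * (dl - j)))) p, ?_⟩
  rw [Finset.sum_range_succ]
  have hlast : (MvPowerSeries.coeff (R := K)
      (Finsupp.single (0 : Fin 2) (u + m * dl) +
        Finsupp.single (1 : Fin 2) (n * (dl - dl))))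
      (MvPowerSeries.X 0 ^ c * U)
      = MvPowerSeries.constantCoeff (σ := Fin 2) (R := K) U := by
    rw [MvPowerSeries.X_pow_eq, MvPowerSeries.coeff_monomial_mul]
    simp [hedge, MvPowerSeries.coeff_zero_eq_constantCoeff]
  have hmid : ∀ k ∈ Finset.range dl,
      Polynomial.C
          (Polynomial.C ((MvPowerSeries.coeff (R := K)
              (Finsupp.single (0 : Fin 2) (u + m * k) +
                Finsupp.single (1 : Fin 2) (n * (dl - k)))) p) -
            Polynomial.C ((MvPowerSeries.coeff (R := K)
              (Finsupp.single (0 : Fin 2) (u + m * k) +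
                Finsupp.single (1 : Fin 2) (n * (dl - k))))
              (MvPowerSeries.X 0 ^ c * U)) * Polynomial.X) *
          Polynomial.X ^ (dl - k)
      = Polynomial.C (Polynomial.C ((MvPowerSeries.coeff (R := K)
          (Finsupp.single (0 : Fin 2) (u + m * k) +
            Finsupp.single (1 : Fin 2) (n * (dl - k)))) p))
          * Polynomial.X ^ (dl - k) := by
    intro k hk
    have hk' : k < dl := Finset.mem_range.mp hk
    have hlt : u + m * k < c := by
      have : m * k < m * dl := (Nat.mul_lt_mul_left hm).mpr hk'
      omega
    have hz : (MvPowerSeries.coeff (R := K)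
        (Finsupp.single (0 : Fin 2) (u + m * k) +
          Finsupp.single (1 : Fin 2) (n * (dl - k))))
        (MvPowerSeries.X 0 ^ c * U) = 0 := by
      rw [MvPowerSeries.X_pow_eq, MvPowerSeries.coeff_monomial_mul, if_neg]
      intro hle
      have := hle 0
      simp [Finsupp.single_apply] at this
      omega
    rw [hz]
    simp only [map_zero, zero_mul, sub_zero]
  rw [Finset.sum_congr rfl hmid, hlast]
  have hp0 : (MvPowerSeries.coeff (R := K)
      (Finsupp.single (0 : Fin 2) (u + m * dl) +
        Finsupp.single (1 : Fin 2) (n * (dl - dl)))) p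
      = (fun j => (MvPowerSeries.coeff (R := K)
      (Finsupp.single (0 : Fin 2) (u + m * j) +
        Finsupp.single (1 : Fin 2) (n * (dl - j)))) p) dl := rfl
  simp only [Nat.sub_self, pow_zero, mul_one, map_sub, map_mul]
  ring
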